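/- arXiv:1301.5089 — 2 statements merged into one kernel-verified Lean document; each statement's English description precedes it below -/
import Mathlib

section
/- The four following schemas are intuitionistically equivalent (for any predicate A over a type α): (1) (∀ x, ¬¬A x) → ¬¬(∀ x, A x); (2) ¬(∀ x, A x) → ¬(∀ x, ¬¬A x); (3) ¬¬(∀ x, A x ∨ ¬A x); (4) ¬((∀ x, ¬¬A x) ∧ ¬(∀ x, A x)). That is, each pairwise implication among these four statements holds constructively (without using the law of excluded middle). -/
theorem dns_four_equivalents (α : Type*) :
    ((∀ A : α → Prop, (∀ x, ¬¬A x) → ¬¬(∀ x, A x)) ↔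
      (∀ A : α → Prop, ¬(∀ x, A x) → ¬(∀ x, ¬¬A x))) ∧
    ((∀ A : α → Prop, (∀ x, ¬¬A x) → ¬¬(∀ x, A x)) ↔
      (∀ A : α → Prop, ¬¬(∀ x, A x ∨ ¬A x))) ∧
    ((∀ A : α → Prop, (∀ x, ¬¬A x) → ¬¬(∀ x, A x)) ↔
      (∀ A : α → Prop, ¬((∀ x, ¬¬A x) ∧ ¬(∀ x, A x)))) := by
  refine ⟨⟨fun h A hn hdn => h A hdn hn, fun h A hdn hn => h A hn hdn⟩,
    ⟨fun h A => h (fun x => A x ∨ ¬A x) (fun x k => k (Or.inr (fun a => k (Or.inl a)))),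
     fun h A hdn k => h A (fun hd => k (fun x => (hd x).elim id (fun na => absurd na (hdn x))))⟩,
    ⟨fun h A ⟨hdn, hn⟩ => h A hdn hn, fun h A hdn hn => h A ⟨hdn, hn⟩⟩⟩
end

section
/- Glivenko-style property of the Kuroda translation in presence of DNS: assuming DNS at all relevant types (the schema (∀ x, ¬¬B x) → ¬¬(∀ x, B x) for all predicates B appearing), the double negation ¬¬⟦A⟧ of the interpretation of a formula A is constructively equivalent to the interpretation of its Kuroda translation ⟦A^⊥⟧. -/
inductive Fml (α : Type u) : Type (u + 1) where
  | atom : Prop → Fml α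
  | bot : Fml α
  | conj : Fml α → Fml α → Fml α
  | disj : Fml α → Fml α → Fml α
  | imp : Fml α → Fml α → Fml α
  | all : (α → Fml α) → Fml α
  | ex : (α → Fml α) → Fml α

def Fml.interp {α : Type u} : Fml α → Prop
  | atom P => P
  | bot => False
  | conj A B => A.interp ∧ B.interp
  | disj A B => A.interp ∨ B.interp
  | imp A B => A.interp → B.interp
  | all A => ∀ x, (A x).interp
  | ex A => ∃ x, (A x).interp

/-- The Kuroda translation `A ↦ A_⊥`. -/
def Fml.kuroda {α : Type u} : Fml α → Fml α
  | atom P => atom P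
  | bot => bot
  | conj A B => conj A.kuroda B.kuroda
  | disj A B => disj A.kuroda B.kuroda
  | imp A B => imp A.kuroda (imp (imp B.kuroda bot) bot)
  | all A => all fun x => imp (imp (A x).kuroda bot) bot
  | ex A => ex fun x => (A x).kuroda

theorem kuroda_glivenko_of_dns {α : Type u}
    (dns : ∀ B : α → Prop, (∀ x, ¬¬B x) → ¬¬(∀ x, B x))
    (A : Fml α) :
    ¬¬A.interp ↔ ¬¬A.kuroda.interp := by
  induction A with
  | atom P => exact Iff.rfl
  | bot => exact Iff.rfl
  | conj A B ihA ihB =>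
    simp only [Fml.kuroda, Fml.interp]
    constructor
    · intro h hn
      exact (ihA.mp (fun ha => h fun hab => ha hab.1)) fun ka =>
        (ihB.mp (fun hb => h fun hab => hb hab.2)) fun kb => hn ⟨ka, kb⟩
    · intro h hn
      exact (ihA.mpr (fun ha => h fun hab => ha hab.1)) fun ka =>
        (ihB.mpr (fun hb => h fun hab => hb hab.2)) fun kb => hn ⟨ka, kb⟩
  | disj A B ihA ihB =>
    simp only [Fml.kuroda, Fml.interp]
    constructor
    · intro h hn
      exact h fun hab => hab.elim
        (fun ha => ihA.mp (fun hna => hna ha) fun ka => hn (Or.inl ka))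
        (fun hb => ihB.mp (fun hnb => hnb hb) fun kb => hn (Or.inr kb))
    · intro h hn
      exact h fun hab => hab.elim
        (fun ha => ihA.mpr (fun hna => hna ha) fun ka => hn (Or.inl ka))
        (fun hb => ihB.mpr (fun hnb => hnb hb) fun kb => hn (Or.inr kb))
  | imp A B ihA ihB =>
    simp only [Fml.kuroda, Fml.interp]
    constructor
    · intro h hn
      apply hn
      intro ka hnkb
      have hnb : ¬B.interp := fun hb => ihB.mp (fun h' => h' hb) hnkb
      have hna : ¬¬A.interp := ihA.mpr fun h' => h' ka
      exact hna fun ha => h fun hab => hnb (hab ha)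
    · intro h hn
      apply h
      intro hk
      have hna : ¬¬A.interp := fun hna => hn fun ha => absurd ha hna
      have hnb : ¬B.interp := fun hb => hn fun _ => hb
      exact hna fun ha =>
        ihA.mp (fun h' => h' ha) fun ka =>
          hk ka fun kb => (ihB.mpr fun h' => h' kb) hnb
  | all A ih =>
    simp only [Fml.kuroda, Fml.interp]
    constructor
    · intro h hn
      apply hn
      intro x hk
      exact (ih x).mp (fun hna => h fun hall => hna (hall x)) hk
    · intro h hn
      apply h
      intro hk
      exact dns (fun x => (A x).interp)
        (fun x => (ih x).mpr (hk x)) hn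
  | ex A ih =>
    simp only [Fml.kuroda, Fml.interp]
    constructor
    · intro h hn
      exact h fun ⟨x, hx⟩ =>
        (ih x).mp (fun hna => hna hx) fun kx => hn ⟨x, kx⟩
    · intro h hn
      exact h fun ⟨x, hx⟩ =>
        (ih x).mpr (fun hna => hna hx) fun kx => hn ⟨x, kx⟩
end
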